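/- Let a, b, λ > 0. Define the angle-dependent gain factor G(θ, φ) = (1 + cos θ)² · sinc²((πb/λ)·sin θ·cos φ) · f((πa/λ)·sin θ·sin φ)², where sinc(x) = sin(x)/x for x ≠ 0 and sinc(0) = 1, and f(x) = cos(x)/(1 − (2x/π)²) extended by f(±π/2) = π/4. Then for all θ ∈ [0, π] and all φ ∈ ℝ, G(θ, φ) ≤ 4, and G(0, φ) = 4 for every φ. Hence the gain factor attains its global maximum exactly at boresight θ = 0. -/

import Mathlib

/-- The unnormalized sinc function: `sinc x = sin x / x` for `x ≠ 0`, `sinc 0 = 1`. -/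
noncomputable def sinc (x : ℝ) : ℝ := if x = 0 then 1 else Real.sin x / x

/-- The one-dimensional TE₁₀ pattern factor `cos x / (1 − (2x/π)²)`, extended through
its removable singularities at `x = ±π/2` by the value `π/4`. -/
noncomputable def patternFactor (x : ℝ) : ℝ :=
  if x = Real.pi / 2 ∨ x = -(Real.pi / 2) then Real.pi / 4
  else Real.cos x / (1 - (2 * x / Real.pi) ^ 2)

/-- The angle-dependent gain factor of a rectangular TE₁₀ aperture of dimensions
`a × b` at wavelength `lam`:
`G(θ,φ) = (1+cos θ)² · sinc²((πb/lam) sin θ cos φ) · patternFactor((πa/lam) sin θ sin φ)²`. -/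
noncomputable def gainFactor (a b lam θ φ : ℝ) : ℝ :=
  (1 + Real.cos θ) ^ 2 * (sinc (Real.pi * b / lam * Real.sin θ * Real.cos φ)) ^ 2 *
    (patternFactor (Real.pi * a / lam * Real.sin θ * Real.sin φ)) ^ 2

lemma sinc_sq_le_one (x : ℝ) : sinc x ^ 2 ≤ 1 := by
  unfold sinc
  split_ifs with h
  · norm_num
  · rw [div_pow, div_le_one (by positivity)]
    exact Real.sin_sq_le_sq

/-- chord inequality from concavity of sin on [0, π] -/
lemma chord_sin {t : ℝ} (h0 : 0 ≤ t) (h1 : t ≤ Real.pi / 4) :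
    Real.sqrt 2 / 2 * (4 * t / Real.pi) ≤ Real.sin t := by
  have hπ := Real.pi_pos
  have hc := strictConcaveOn_sin_Icc.concaveOn
  set s : ℝ := 4 * t / Real.pi with hs
  have hs0 : 0 ≤ s := by positivity
  have hs1 : s ≤ 1 := by
    rw [hs, div_le_one hπ]; linarith
  have hmem0 : (0 : ℝ) ∈ Set.Icc 0 Real.pi := ⟨le_refl _, hπ.le⟩
  have hmem1 : Real.pi / 4 ∈ Set.Icc 0 Real.pi := ⟨by positivity, by linarith⟩
  have key := hc.2 hmem0 hmem1 (show (0:ℝ) ≤ 1 - s by linarith) hs0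
    (show 1 - s + s = 1 by ring)
  have hcomb : (1 - s) • (0 : ℝ) + s • (Real.pi / 4) = t := by
    rw [smul_zero, zero_add, smul_eq_mul, hs, div_mul_eq_mul_div, div_eq_iff hπ.ne']
    ring
  rw [hcomb, Real.sin_zero, smul_zero, zero_add, smul_eq_mul] at key
  rw [Real.sin_pi_div_four] at key
  calc Real.sqrt 2 / 2 * (4 * t / Real.pi) = s * (Real.sqrt 2 / 2) := by rw [hs]; ring
    _ ≤ Real.sin t := key

lemma patternFactor_sq_le_one (x : ℝ) : patternFactor x ^ 2 ≤ 1 := by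
  have hπ := Real.pi_pos
  have hπ4 := Real.pi_le_four
  unfold patternFactor
  split_ifs with h
  · nlinarith
  · push_neg at h
    obtain ⟨h1, h2⟩ := h
    rcases le_or_gt |x| (Real.pi / 2) with hle | hgt
    · -- |x| < π/2 (equality excluded)
      have hlt : |x| < Real.pi / 2 := by
        rcases lt_or_eq_of_le hle with h | h
        · exact h
        · exfalso
          rcases abs_cases x with ⟨hx, _⟩ | ⟨hx, _⟩
          · exact h1 (by linarith [hx ▸ h])
          · exact h2 (by linarith [hx ▸ h])
      have hxle : -(Real.pi / 2) < x ∧ x < Real.pi / 2 := abs_lt.mp hlt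
      have hcosnn : 0 ≤ Real.cos x :=
        Real.cos_nonneg_of_mem_Icc ⟨by linarith [hxle.1], by linarith [hxle.2]⟩
      -- sin(x/2)² ≥ 2x²/π²
      have ht0 : (0:ℝ) ≤ |x| / 2 := by positivity
      have ht1 : |x| / 2 ≤ Real.pi / 4 := by linarith
      have hch := chord_sin ht0 ht1
      have hsq2 : Real.sqrt 2 ^ 2 = 2 := Real.sq_sqrt (by norm_num)
      have hchnn : 0 ≤ Real.sqrt 2 / 2 * (4 * (|x| / 2) / Real.pi) := by positivity
      have hsinsq : (Real.sqrt 2 / 2 * (4 * (|x| / 2) / Real.pi)) ^ 2 ≤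
          Real.sin (|x| / 2) ^ 2 := pow_le_pow_left₀ hchnn hch 2
      have habs : Real.sin (|x| / 2) ^ 2 = Real.sin (x / 2) ^ 2 := by
        rcases abs_cases x with ⟨hx, _⟩ | ⟨hx, _⟩
        · rw [hx]
        · rw [hx, show -x / 2 = -(x / 2) by ring, Real.sin_neg]
          ring
      have hval : (Real.sqrt 2 / 2 * (4 * (|x| / 2) / Real.pi)) ^ 2 =
          2 * x ^ 2 / Real.pi ^ 2 := by
        rw [mul_pow, div_pow, div_pow, hsq2,
          show ((4:ℝ) * (|x| / 2)) ^ 2 = 4 * x ^ 2 by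
            rw [show (4:ℝ) * (|x| / 2) = 2 * |x| by ring, mul_pow, sq_abs]; norm_num]
        ring
      rw [habs, hval] at hsinsq
      -- cos x = 1 - 2 sin(x/2)²
      have hcid : Real.sin (x / 2) ^ 2 = 1 / 2 - Real.cos (2 * (x / 2)) / 2 :=
        Real.sin_sq_eq_half_sub (x / 2)
      rw [show 2 * (x / 2) = x by ring] at hcid
      have hD : Real.cos x ≤ 1 - (2 * x / Real.pi) ^ 2 := by
        have hexp : (2 * x / Real.pi) ^ 2 = 4 * x ^ 2 / Real.pi ^ 2 := by
          rw [div_pow]; ring_nf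
        rw [hexp]
        have : 4 * x ^ 2 / Real.pi ^ 2 = 2 * (2 * x ^ 2 / Real.pi ^ 2) := by ring
        linarith [hsinsq, hcid]
      have hDpos : 0 < 1 - (2 * x / Real.pi) ^ 2 := by
        have : (2 * x / Real.pi) ^ 2 < 1 := by
          have hx2 : x ^ 2 < (Real.pi / 2) ^ 2 := by
            have := sq_abs x
            nlinarith [hlt, abs_nonneg x]
          rw [div_pow]
          rw [div_lt_one (by positivity)]
          nlinarith
        linarith
      rw [div_pow, div_le_one (by positivity)]
      exact pow_le_pow_left₀ hcosnn hD 2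
    · -- |x| > π/2
      set y := |x| with hy
      have hy0 : 0 ≤ y := abs_nonneg x
      have hy2 : y ^ 2 = x ^ 2 := sq_abs x
      -- |cos x| ≤ y - π/2
      have hcosabs : |Real.cos x| ≤ y - Real.pi / 2 := by
        have hca : Real.cos y = Real.cos x := Real.cos_abs x
        have : Real.cos y = Real.sin (Real.pi / 2 - y) := (Real.sin_pi_div_two_sub y).symm
        have habs2 : |Real.cos x| = |Real.sin (y - Real.pi / 2)| := by
          rw [← hca, this, show Real.pi / 2 - y = -(y - Real.pi / 2) by ring,
            Real.sin_neg, abs_neg]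
        rw [habs2]
        calc |Real.sin (y - Real.pi / 2)| ≤ |y - Real.pi / 2| := Real.abs_sin_le_abs
          _ = y - Real.pi / 2 := abs_of_nonneg (by linarith)
      have hcossq : Real.cos x ^ 2 ≤ (y - Real.pi / 2) ^ 2 := by
        have := pow_le_pow_left₀ (abs_nonneg (Real.cos x)) hcosabs 2
        rwa [sq_abs] at this
      have hfac : 0 ≤ (y - Real.pi / 2) ^ 2 * ((y + Real.pi / 2) ^ 2 * 16 - Real.pi ^ 4) := by
        apply mul_nonneg (sq_nonneg _)
        have h1 : Real.pi ^ 2 ≤ (y + Real.pi / 2) ^ 2 := by nlinarith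
        have hπ2 : Real.pi ^ 2 ≤ 16 := by nlinarith
        nlinarith [mul_nonneg (sq_nonneg Real.pi) (by linarith : (0:ℝ) ≤ 16 - Real.pi ^ 2)]
      have hDne : (1 - (2 * x / Real.pi) ^ 2) ≠ 0 := by
        have : (2 * x / Real.pi) ^ 2 > 1 := by
          rw [div_pow, gt_iff_lt, lt_div_iff₀ (by positivity)]
          nlinarith
        linarith
      rw [div_pow, div_le_one (by positivity)]
      have hexp : (1 - (2 * x / Real.pi) ^ 2) ^ 2 =
          (Real.pi ^ 2 - 4 * x ^ 2) ^ 2 / Real.pi ^ 4 := by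
        field_simp
        ring
      rw [hexp, le_div_iff₀ (by positivity)]
      nlinarith [hcossq, hfac, hy2, sq_nonneg (y - Real.pi / 2), pow_pos hπ 4]

lemma patternFactor_zero : patternFactor 0 = 1 := by
  have hπ := Real.pi_pos
  unfold patternFactor
  rw [if_neg]
  · norm_num
  · push_neg
    constructor <;> intro h <;> nlinarith [h]

/-- **Boresight optimality of the gain factor.** For `a, b, λ > 0`, the gain factor
satisfies `G(θ,φ) ≤ 4` for all `θ ∈ [0,π]` and all `φ`, and `G(0,φ) = 4` for every `φ`;
hence the global maximum is attained exactly at boresight `θ = 0`. -/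
theorem gainFactor_le_four (a b lam : ℝ) (ha : 0 < a) (hb : 0 < b) (hlam : 0 < lam) :
    (∀ θ ∈ Set.Icc (0 : ℝ) Real.pi, ∀ φ : ℝ, gainFactor a b lam θ φ ≤ 4) ∧
      (∀ φ : ℝ, gainFactor a b lam 0 φ = 4) := by
  constructor
  · intro θ hθ φ
    unfold gainFactor
    have h1 : (1 + Real.cos θ) ^ 2 ≤ 4 := by
      nlinarith [Real.cos_le_one θ, Real.neg_one_le_cos θ]
    have h2 := sinc_sq_le_one (Real.pi * b / lam * Real.sin θ * Real.cos φ)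
    have h3 := patternFactor_sq_le_one (Real.pi * a / lam * Real.sin θ * Real.sin φ)
    have n1 : (0:ℝ) ≤ (1 + Real.cos θ) ^ 2 := sq_nonneg _
    have n2 : (0:ℝ) ≤ (sinc (Real.pi * b / lam * Real.sin θ * Real.cos φ)) ^ 2 := sq_nonneg _
    have n3 : (0:ℝ) ≤ (patternFactor (Real.pi * a / lam * Real.sin θ * Real.sin φ)) ^ 2 :=
      sq_nonneg _
    nlinarith [mul_nonneg n1 n2, mul_nonneg n2 n3]
  · intro φ
    unfold gainFactor
    rw [Real.sin_zero, Real.cos_zero]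
    norm_num
    rw [show sinc 0 = 1 from if_pos rfl, patternFactor_zero]
    norm_num
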